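/- For ρ, α, τ with 0 < ρ ≤ 1/α and τ > 0, there exist a ∈ {ρ, 1/α} and b ∈ {0, 1/β} such that the Peaceman–Rachford map on f(x) = a·x²/2, g(x) = b·x²/2 is exactly a scaling by (1−τa)(1−τb)/((1+τa)(1+τb)), whose absolute value equals max_{a∈{ρ,1/α}} |1−τa|/(1+τa) when b = 0. Hence the Lipschitz bound max_{a∈{ρ,1/α}} |1−τa|/(1+τa) for Peaceman–Rachford on the class of ρ-strongly convex, (1/α)-smooth f and convex g is attained by quadratic functions. -/
import Mathlib

lemma prs_scale (τ a x : ℝ) (h : 1 + τ * a ≠ 0) :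
    2 * ((2 * (x / (1 + τ * a)) - x) / (1 + τ * 0))
          - 2 * (x / (1 + τ * a)) + x =
        ((1 - τ * a) * (1 - τ * 0) / ((1 + τ * a) * (1 + τ * 0))) * x := by
  field_simp
  ring

lemma abs_div_pos (a τ : ℝ) (ha : 0 < a) (hτ : 0 < τ) :
    |(1 - τ * a) * (1 - τ * 0) / ((1 + τ * a) * (1 + τ * 0))| =
      |1 - τ * a| / (1 + τ * a) := by
  have h : 0 < 1 + τ * a := by positivity
  rw [abs_div, abs_mul, abs_mul]
  simp [abs_of_pos h]

/-- Tightness of the Peaceman–Rachford bound via quadratics: there are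
a ∈ {ρ, 1/α}, b ∈ {0, 1/β} such that the PRS map on f = a x²/2, g = b x²/2
is an exact scaling attaining the bound. -/
theorem prs_tight (α β ρ τ : ℝ) (hα : 0 < α) (hβ : 0 < β) (hρ : 0 < ρ)
    (hρα : ρ ≤ 1 / α) (hτ : 0 < τ) :
    ∃ a ∈ ({ρ, 1 / α} : Set ℝ), ∃ b ∈ ({0, 1 / β} : Set ℝ), b = 0 ∧
      (∀ x : ℝ, 2 * ((2 * (x / (1 + τ * a)) - x) / (1 + τ * b))
          - 2 * (x / (1 + τ * a)) + x =
        ((1 - τ * a) * (1 - τ * b) / ((1 + τ * a) * (1 + τ * b))) * x) ∧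
      |(1 - τ * a) * (1 - τ * b) / ((1 + τ * a) * (1 + τ * b))| =
        max (|1 - τ * ρ| / (1 + τ * ρ))
          (|1 - τ * (1 / α)| / (1 + τ * (1 / α))) := by
  have hia : 0 < 1 / α := by positivity
  rcases le_total (|1 - τ * ρ| / (1 + τ * ρ)) (|1 - τ * (1 / α)| / (1 + τ * (1 / α))) with h | h
  · refine ⟨1 / α, Or.inr rfl, 0, Or.inl rfl, rfl, fun x => prs_scale τ (1/α) x (by positivity), ?_⟩
    rw [abs_div_pos _ _ hia hτ, max_eq_right h]
  · refine ⟨ρ, Or.inl rfl, 0, Or.inl rfl, rfl, fun x => prs_scale τ ρ x (by positivity), ?_⟩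
    rw [abs_div_pos _ _ hρ hτ, max_eq_left h]
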